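/- Let n ≥ 1, let a₀ ∈ ℝⁿ, let U be an open neighborhood of a₀ in ℝⁿ, and let F : ℝⁿ → ℝⁿ be differentiable at every point of U, with derivative DF(x). Assume DF(a₀) is invertible, set h₀ = -(DF(a₀))⁻¹ (F(a₀)) and a₁ = a₀ + h₀, and let B̄ be the closed ball in ℝⁿ of radius ‖h₀‖ centered at a₁. Assume B̄ ⊆ U, that DF satisfies the Lipschitz condition ‖DF(u₁) - DF(u₂)‖ ≤ M·‖u₁ - u₂‖ for all u₁, u₂ ∈ B̄, and that ‖F(a₀)‖ · ‖(DF(a₀))⁻¹‖² · M ≤ 1/2. Then the Newton iteration starting at a₀ is well defined for all k — that is, there is a sequence (a_k) with the given a₀ such that for every k, a_k ∈ B̄, DF(a_k) is invertible, and a_{k+1} = a_k - (DF(a_k))⁻¹ (F(a_k)) — and this sequence converges to a point x ∈ B̄ satisfying F(x) = 0. -/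

import Mathlib

open Set Metric Filter

/-- Quadratic Taylor remainder bound for a function whose derivative is Lipschitz on a
convex set. -/
theorem kantorovich_taylor_aux {E G : Type*} [NormedAddCommGroup E] [NormedSpace ℝ E]
    [NormedAddCommGroup G] [NormedSpace ℝ G]
    {s : Set E} (hs : Convex ℝ s) {f : E → G} {f' : E → E →L[ℝ] G}
    (hf : ∀ z ∈ s, HasFDerivWithinAt f (f' z) s z) {M : ℝ}
    (hlip : ∀ u ∈ s, ∀ v ∈ s, ‖f' u - f' v‖ ≤ M * ‖u - v‖)
    {x y : E} (hx : x ∈ s) (hy : y ∈ s) :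
    ‖f y - f x - f' x (y - x)‖ ≤ M / 2 * ‖y - x‖ ^ 2 := by
  set h : E := y - x with hh
  set γ : ℝ → E := fun t => x + t • h with hγ
  have hmap : Set.MapsTo γ (Icc (0:ℝ) 1) s := fun t ht => hs.add_smul_sub_mem hx hy ht
  have hγd : ∀ t : ℝ, HasDerivAt γ h t := by
    intro t
    simpa [hγ] using ((hasDerivAt_id t).smul_const h).const_add x
  set g : ℝ → G := fun t => f (γ t) - t • f' x h - f x with hg
  have hgd : ∀ t ∈ Icc (0:ℝ) 1,
      HasDerivWithinAt g (f' (γ t) h - f' x h) (Icc (0:ℝ) 1) t := by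
    intro t ht
    have h1 : HasDerivWithinAt (f ∘ γ) (f' (γ t) h) (Icc (0:ℝ) 1) t :=
      (hf (γ t) (hmap ht)).comp_hasDerivWithinAt t (hγd t).hasDerivWithinAt hmap
    have h2 : HasDerivWithinAt (fun t : ℝ => t • f' x h) (f' x h) (Icc (0:ℝ) 1) t := by
      simpa using (((hasDerivAt_id t).smul_const (f' x h)).hasDerivWithinAt :
        HasDerivWithinAt (fun t : ℝ => t • f' x h) ((1:ℝ) • f' x h) (Icc (0:ℝ) 1) t)
    simpa [hg] using (h1.sub h2).sub_const (f x)
  have hgd' : ∀ t ∈ Ico (0:ℝ) 1,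
      HasDerivWithinAt g (f' (γ t) h - f' x h) (Ici t) t := fun t ht =>
    (hgd t (Ico_subset_Icc_self ht)).mono_of_mem_nhdsWithin (Icc_mem_nhdsGE_of_mem ht)
  have hB : ∀ t : ℝ, HasDerivAt (fun t => M * ‖h‖ ^ 2 / 2 * t ^ 2) (M * ‖h‖ ^ 2 * t) t := by
    intro t
    have := (hasDerivAt_pow 2 t).const_mul (M * ‖h‖ ^ 2 / 2)
    refine this.congr_deriv ?_
    ring
  have bound : ∀ t ∈ Ico (0:ℝ) 1, ‖f' (γ t) h - f' x h‖ ≤ M * ‖h‖ ^ 2 * t := by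
    intro t ht
    have e1 : f' (γ t) h - f' x h = (f' (γ t) - f' x) h := by simp
    have e2 : ‖γ t - x‖ = t * ‖h‖ := by
      have : γ t - x = t • h := by simp [hγ]
      rw [this, norm_smul, Real.norm_eq_abs, abs_of_nonneg ht.1]
    calc ‖f' (γ t) h - f' x h‖ = ‖(f' (γ t) - f' x) h‖ := by rw [e1]
      _ ≤ ‖f' (γ t) - f' x‖ * ‖h‖ := ContinuousLinearMap.le_opNorm _ _
      _ ≤ M * ‖γ t - x‖ * ‖h‖ := by
          have := hlip (γ t) (hmap (Ico_subset_Icc_self ht)) x hx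
          exact mul_le_mul_of_nonneg_right this (norm_nonneg _)
      _ = M * ‖h‖ ^ 2 * t := by rw [e2]; ring
  have hcont : ContinuousOn g (Icc (0:ℝ) 1) := fun t ht =>
    (hgd t ht).continuousWithinAt
  have ha0 : ‖g 0‖ ≤ M * ‖h‖ ^ 2 / 2 * 0 ^ 2 := by simp [hg, hγ]
  have := image_norm_le_of_norm_deriv_right_le_deriv_boundary hcont hgd' ha0 hB bound
    (right_mem_Icc.2 zero_le_one)
  have hγ1 : γ 1 = y := by rw [hγ]; simp only [one_smul, hh]; abel
  have hg1 : g 1 = f y - f x - f' x (y - x) := by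
    simp only [hg]
    rw [hγ1, hh, one_smul]
    abel
  rw [hg1] at this
  calc ‖f y - f x - f' x (y - x)‖ ≤ M * ‖h‖ ^ 2 / 2 * 1 ^ 2 := this
    _ = M / 2 * ‖y - x‖ ^ 2 := by rw [hh]; ring

/-- Perturbation of a unit in a complete normed ring: quantitative bound on the inverse. -/
theorem kantorovich_unit_perturb {R : Type*} [NormedRing R] [CompleteSpace R]
    (hone : ‖(1 : R)‖ ≤ 1) (u : Rˣ) (b : R)
    (hw : ‖(↑u⁻¹ : R) * (b - ↑u)‖ ≤ 1 / 2) :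
    ∃ v : Rˣ, (↑v : R) = b ∧ ‖(↑v⁻¹ : R)‖ ≤ 2 * ‖(↑u⁻¹ : R)‖ := by
  set w : R := (↑u⁻¹ : R) * (b - ↑u) with hwdef
  have hlt : ‖-w‖ < 1 := by
    rw [norm_neg]
    exact lt_of_le_of_lt hw one_half_lt_one
  set t : Rˣ := Units.oneSub (-w) hlt with ht
  have htval : (↑t : R) = 1 + w := by
    rw [ht, Units.val_oneSub, sub_neg_eq_add]
  refine ⟨u * t, ?_, ?_⟩
  · rw [Units.val_mul, htval, mul_add, mul_one, hwdef, ← mul_assoc, u.mul_inv, one_mul,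
      add_sub_cancel]
  · have htinv : ‖(↑t⁻¹ : R)‖ ≤ 2 := by
      have h1 : (↑t⁻¹ : R) * (1 + w) = 1 := by rw [← htval, t.inv_mul]
      have h2 : (↑t⁻¹ : R) = 1 - (↑t⁻¹ : R) * w := by
        rw [mul_add, mul_one] at h1
        exact eq_sub_of_add_eq h1
      have h3 : ‖(↑t⁻¹ : R)‖ ≤ ‖(1 : R)‖ + ‖(↑t⁻¹ : R)‖ * ‖w‖ := by
        calc ‖(↑t⁻¹ : R)‖ = ‖(1 : R) - (↑t⁻¹ : R) * w‖ := by rw [← h2]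
          _ ≤ ‖(1 : R)‖ + ‖(↑t⁻¹ : R) * w‖ := norm_sub_le _ _
          _ ≤ ‖(1 : R)‖ + ‖(↑t⁻¹ : R)‖ * ‖w‖ := by
              gcongr; exact norm_mul_le _ _
      have h4 : ‖(↑t⁻¹ : R)‖ * ‖w‖ ≤ ‖(↑t⁻¹ : R)‖ * (1 / 2) :=
        mul_le_mul_of_nonneg_left hw (norm_nonneg _)
      linarith
    calc ‖(↑(u * t)⁻¹ : R)‖ = ‖(↑t⁻¹ : R) * (↑u⁻¹ : R)‖ := by rw [mul_inv_rev, Units.val_mul]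
      _ ≤ ‖(↑t⁻¹ : R)‖ * ‖(↑u⁻¹ : R)‖ := norm_mul_le _ _
      _ ≤ 2 * ‖(↑u⁻¹ : R)‖ := mul_le_mul_of_nonneg_right htinv (norm_nonneg _)


set_option maxHeartbeats 2000000 in
theorem kantorovich_aux {E : Type*} [NormedAddCommGroup E] [NormedSpace ℝ E] [CompleteSpace E]
    (F : E → E) (DF : E → (E →L[ℝ] E)) (a₀ : E) (U : Set E)
    (hU : IsOpen U) (ha₀U : a₀ ∈ U)
    (hdiff : ∀ x ∈ U, HasFDerivAt F (DF x) x)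
    (A : E ≃L[ℝ] E) (hA : (A : E →L[ℝ] E) = DF a₀)
    (h₀ a₁ : E) (hh₀ : h₀ = -(A.symm (F a₀))) (ha₁ : a₁ = a₀ + h₀) (M : ℝ)
    (hball : Metric.closedBall a₁ ‖h₀‖ ⊆ U)
    (hlip : ∀ u₁ ∈ Metric.closedBall a₁ ‖h₀‖, ∀ u₂ ∈ Metric.closedBall a₁ ‖h₀‖,
      ‖DF u₁ - DF u₂‖ ≤ M * ‖u₁ - u₂‖)
    (hkant : ‖F a₀‖ * ‖(A.symm : E →L[ℝ] E)‖ ^ 2 * M ≤ 1 / 2) :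
    ∃ a : ℕ → E,
      a 0 = a₀ ∧
      (∀ k : ℕ, a k ∈ Metric.closedBall a₁ ‖h₀‖ ∧
        ∃ Ak : E ≃L[ℝ] E, (Ak : E →L[ℝ] E) = DF (a k) ∧
          a (k + 1) = a k - Ak.symm (F (a k))) ∧
      ∃ x ∈ Metric.closedBall a₁ ‖h₀‖, F x = 0 ∧ Tendsto a atTop (nhds x) := by
  classical
  by_cases hF0 : F a₀ = 0
  · have hh0 : h₀ = 0 := by rw [hh₀, hF0]; simp
    refine ⟨fun _ => a₀, rfl, fun k => ⟨?_, A, hA, by simp [hF0]⟩,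
      a₀, ?_, hF0, tendsto_const_nhds⟩
    · simp [ha₁, hh0]
    · simp [ha₁, hh0]
  -- main case
  have hh0ne : h₀ ≠ 0 := by
    rw [hh₀]
    simp only [ne_eq, neg_eq_zero]
    intro hc
    exact hF0 (by simpa using congrArg A hc)
  have hh0pos : (0:ℝ) < ‖h₀‖ := norm_pos_iff.2 hh0ne
  have ha₀B : a₀ ∈ closedBall a₁ ‖h₀‖ := by
    simp [mem_closedBall, dist_eq_norm, ha₁]
  have hb2 : a₁ + h₀ ∈ closedBall a₁ ‖h₀‖ := by
    simp [mem_closedBall, dist_eq_norm]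
  have hM : 0 ≤ M := by
    have h1 := hlip _ ha₀B _ hb2
    have h2 : a₀ - (a₁ + h₀) = -((2:ℝ) • h₀) := by rw [ha₁]; module
    rw [h2, norm_neg, norm_smul] at h1
    have h3 : (0:ℝ) ≤ M * (‖(2:ℝ)‖ * ‖h₀‖) := le_trans (norm_nonneg _) h1
    have h4 : (0:ℝ) < ‖(2:ℝ)‖ * ‖h₀‖ := by
      apply mul_pos _ hh0pos
      simp [Real.norm_eq_abs]
    nlinarith [h3, h4]
    -- the Newton iteration
  set step : E → E := fun x => x - Ring.inverse (DF x) (F x) with hstepdef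
  set a : ℕ → E := fun k => step^[k] a₀ with hadef
  have ha0 : a 0 = a₀ := rfl
  have hstep : ∀ k, a (k + 1) = a k - Ring.inverse (DF (a k)) (F (a k)) := by
    intro k
    rw [hadef]
    simp only [Function.iterate_succ_apply']
    rfl
  have hfd : ∀ z ∈ closedBall a₁ ‖h₀‖, HasFDerivWithinAt F (DF z) (closedBall a₁ ‖h₀‖) z :=
    fun z hz => (hdiff z (hball hz)).hasFDerivWithinAt
  have htay := fun {x y : E} (hx : x ∈ closedBall a₁ ‖h₀‖) (hy : y ∈ closedBall a₁ ‖h₀‖) =>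
    kantorovich_taylor_aux (convex_closedBall a₁ ‖h₀‖) hfd hlip hx hy
  -- the unit at a₀
  set uA : (E →L[ℝ] E)ˣ := A.toUnit with huA
  have huAval : (↑uA : E →L[ℝ] E) = DF a₀ := hA
  have huAinv : (↑uA⁻¹ : E →L[ℝ] E) = (A.symm : E →L[ℝ] E) := rfl
  have hinv0 : Ring.inverse (DF (a 0)) = (A.symm : E →L[ℝ] E) := by
    rw [ha0, ← huAval, Ring.inverse_unit, huAinv]
  have ha1 : a 1 = a₁ := by
    rw [hstep 0, hinv0, ha0, ha₁, hh₀, sub_eq_add_neg]; rfl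
  have ha1s : a 1 - a 0 = h₀ := by
    rw [ha1, ha0, ha₁]
    abel
  -- the key invariant
  have key : ∀ k : ℕ,
      a k ∈ closedBall a₁ ‖h₀‖ ∧
      ∃ u : (E →L[ℝ] E)ˣ, (↑u : E →L[ℝ] E) = DF (a k) ∧
        ‖F (a k)‖ * ‖(↑u⁻¹ : E →L[ℝ] E)‖ ^ 2 * M ≤ 1 / 2 ∧
        ‖a (k + 1) - a k‖ ≤ ‖h₀‖ / 2 ^ k ∧
        (k ≠ 0 → dist (a k) a₁ + 2 * ‖a (k + 1) - a k‖ ≤ ‖h₀‖) := by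
    intro k
    induction k with
    | zero =>
      refine ⟨by simpa [ha0] using ha₀B, uA, huAval, ?_, ?_, by simp⟩
      · rw [huAinv, ha0]; exact hkant
      · rw [ha1s, pow_zero, div_one]
    | succ k ih =>
      obtain ⟨hmem, u, hu, hkan, hhk, hdistk⟩ := ih
      have hck : (0:ℝ) ≤ ‖(↑u⁻¹ : E →L[ℝ] E)‖ := norm_nonneg _
      have hfknn : (0:ℝ) ≤ ‖F (a k)‖ := norm_nonneg _
      have hhnn : (0:ℝ) ≤ ‖a (k + 1) - a k‖ := norm_nonneg _
      have hinvk : Ring.inverse (DF (a k)) = (↑u⁻¹ : E →L[ℝ] E) := by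
        rw [← hu, Ring.inverse_unit]
      have hkrel : a (k + 1) - a k = -((↑u⁻¹ : E →L[ℝ] E) (F (a k))) := by
        rw [hstep k, hinvk]; abel
      have hhk_le : ‖a (k + 1) - a k‖ ≤ ‖(↑u⁻¹ : E →L[ℝ] E)‖ * ‖F (a k)‖ := by
        rw [hkrel, norm_neg]
        exact ContinuousLinearMap.le_opNorm _ _
      have happ : DF (a k) (a (k + 1) - a k) = -(F (a k)) := by
        rw [hkrel, map_neg, ← hu, ← ContinuousLinearMap.mul_apply, u.mul_inv,
          ContinuousLinearMap.one_apply]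
      -- membership of `a (k+1)`
      have memk1 : a (k + 1) ∈ closedBall a₁ ‖h₀‖ := by
        rcases Nat.eq_zero_or_pos k with hk0 | hkpos
        · subst hk0; rw [ha1]; exact mem_closedBall_self (norm_nonneg _)
        · have h1 := hdistk (Nat.pos_iff_ne_zero.mp hkpos)
          have h2 := dist_triangle (a (k + 1)) (a k) a₁
          have h3 : dist (a (k + 1)) (a k) = ‖a (k + 1) - a k‖ := dist_eq_norm _ _
          rw [mem_closedBall]
          linarith
      -- Taylor estimate
      have hF1 : ‖F (a (k + 1))‖ ≤ M / 2 * ‖a (k + 1) - a k‖ ^ 2 := by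
        have ht := htay hmem memk1
        rw [happ] at ht
        simpa using ht
      -- derivative perturbation is small
      have hw : ‖(↑u⁻¹ : E →L[ℝ] E) * (DF (a (k + 1)) - ↑u)‖ ≤ 1 / 2 := by
        calc ‖(↑u⁻¹ : E →L[ℝ] E) * (DF (a (k + 1)) - ↑u)‖
            ≤ ‖(↑u⁻¹ : E →L[ℝ] E)‖ * ‖DF (a (k + 1)) - (↑u : E →L[ℝ] E)‖ :=
              norm_mul_le _ _
          _ ≤ ‖(↑u⁻¹ : E →L[ℝ] E)‖ * (M * ‖a (k + 1) - a k‖) := by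
              apply mul_le_mul_of_nonneg_left _ hck
              rw [hu]
              simpa using hlip _ memk1 _ hmem
          _ ≤ ‖(↑u⁻¹ : E →L[ℝ] E)‖ * (M * (‖(↑u⁻¹ : E →L[ℝ] E)‖ * ‖F (a k)‖)) := by
              apply mul_le_mul_of_nonneg_left _ hck
              exact mul_le_mul_of_nonneg_left hhk_le hM
          _ = ‖F (a k)‖ * ‖(↑u⁻¹ : E →L[ℝ] E)‖ ^ 2 * M := by ring
          _ ≤ 1 / 2 := hkan
      have hone : ‖(1 : E →L[ℝ] E)‖ ≤ 1 := by
        rw [ContinuousLinearMap.one_def]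
        exact ContinuousLinearMap.norm_id_le
      obtain ⟨v, hv, hvinv⟩ := kantorovich_unit_perturb hone u (DF (a (k + 1))) hw
      have hinvk1 : Ring.inverse (DF (a (k + 1))) = (↑v⁻¹ : E →L[ℝ] E) := by
        rw [← hv, Ring.inverse_unit]
      have hk1rel : a (k + 1 + 1) - a (k + 1) = -((↑v⁻¹ : E →L[ℝ] E) (F (a (k + 1)))) := by
        rw [hstep (k + 1), hinvk1]; abel
      have hk1_le : ‖a (k + 1 + 1) - a (k + 1)‖ ≤ ‖(↑v⁻¹ : E →L[ℝ] E)‖ * ‖F (a (k + 1))‖ := by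
        rw [hk1rel, norm_neg]
        exact ContinuousLinearMap.le_opNorm _ _
      -- the halving step
      have he3 : ‖(↑u⁻¹ : E →L[ℝ] E)‖ * M * ‖a (k + 1) - a k‖ ≤ 1 / 2 := by
        calc ‖(↑u⁻¹ : E →L[ℝ] E)‖ * M * ‖a (k + 1) - a k‖
            ≤ ‖(↑u⁻¹ : E →L[ℝ] E)‖ * M * (‖(↑u⁻¹ : E →L[ℝ] E)‖ * ‖F (a k)‖) :=
              mul_le_mul_of_nonneg_left hhk_le (mul_nonneg hck hM)
          _ = ‖F (a k)‖ * ‖(↑u⁻¹ : E →L[ℝ] E)‖ ^ 2 * M := by ring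
          _ ≤ 1 / 2 := hkan
      have halve : ‖a (k + 1 + 1) - a (k + 1)‖ ≤ ‖a (k + 1) - a k‖ / 2 := by
        have e1 : ‖a (k + 1 + 1) - a (k + 1)‖
            ≤ (2 * ‖(↑u⁻¹ : E →L[ℝ] E)‖) * (M / 2 * ‖a (k + 1) - a k‖ ^ 2) :=
          le_trans hk1_le (mul_le_mul hvinv hF1 (norm_nonneg _) (by positivity))
        have e2 : (2 * ‖(↑u⁻¹ : E →L[ℝ] E)‖) * (M / 2 * ‖a (k + 1) - a k‖ ^ 2)
            = (‖(↑u⁻¹ : E →L[ℝ] E)‖ * M * ‖a (k + 1) - a k‖) * ‖a (k + 1) - a k‖ := by ring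
        have e4 : (‖(↑u⁻¹ : E →L[ℝ] E)‖ * M * ‖a (k + 1) - a k‖) * ‖a (k + 1) - a k‖
            ≤ (1 / 2) * ‖a (k + 1) - a k‖ := mul_le_mul_of_nonneg_right he3 hhnn
        rw [e2] at e1
        linarith
      -- geometric decay
      have geom1 : ‖a (k + 1 + 1) - a (k + 1)‖ ≤ ‖h₀‖ / 2 ^ (k + 1) := by
        have e1 : ‖a (k + 1) - a k‖ / 2 ≤ (‖h₀‖ / 2 ^ k) / 2 := by linarith
        have e2 : (‖h₀‖ / 2 ^ k) / 2 = ‖h₀‖ / 2 ^ (k + 1) := by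
          rw [pow_succ]; ring
        linarith
      -- Kantorovich quantity at k+1
      have kant1 : ‖F (a (k + 1))‖ * ‖(↑v⁻¹ : E →L[ℝ] E)‖ ^ 2 * M ≤ 1 / 2 := by
        have t1 : ‖(↑v⁻¹ : E →L[ℝ] E)‖ ^ 2 ≤ (2 * ‖(↑u⁻¹ : E →L[ℝ] E)‖) ^ 2 :=
          pow_le_pow_left₀ (norm_nonneg _) hvinv 2
        have t2 : ‖F (a (k + 1))‖ * ‖(↑v⁻¹ : E →L[ℝ] E)‖ ^ 2 * M
            ≤ (M / 2 * ‖a (k + 1) - a k‖ ^ 2) * (2 * ‖(↑u⁻¹ : E →L[ℝ] E)‖) ^ 2 * M := by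
          apply mul_le_mul_of_nonneg_right _ hM
          exact mul_le_mul hF1 t1 (by positivity) (by positivity)
        have t3 : ‖a (k + 1) - a k‖ ^ 2 ≤ (‖(↑u⁻¹ : E →L[ℝ] E)‖ * ‖F (a k)‖) ^ 2 :=
          pow_le_pow_left₀ hhnn hhk_le 2
        have t4 : (M / 2 * ‖a (k + 1) - a k‖ ^ 2) * (2 * ‖(↑u⁻¹ : E →L[ℝ] E)‖) ^ 2 * M
            ≤ (M / 2 * (‖(↑u⁻¹ : E →L[ℝ] E)‖ * ‖F (a k)‖) ^ 2)
                * (2 * ‖(↑u⁻¹ : E →L[ℝ] E)‖) ^ 2 * M := by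
          apply mul_le_mul_of_nonneg_right _ hM
          apply mul_le_mul_of_nonneg_right _ (by positivity)
          exact mul_le_mul_of_nonneg_left t3 (by positivity)
        have t5 : (M / 2 * (‖(↑u⁻¹ : E →L[ℝ] E)‖ * ‖F (a k)‖) ^ 2)
            * (2 * ‖(↑u⁻¹ : E →L[ℝ] E)‖) ^ 2 * M
            = 2 * (‖F (a k)‖ * ‖(↑u⁻¹ : E →L[ℝ] E)‖ ^ 2 * M) ^ 2 := by ring
        nlinarith [hkan, mul_nonneg (mul_nonneg hfknn (pow_nonneg hck 2)) hM]
      -- distance invariant at k+1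
      have dist1 : dist (a (k + 1)) a₁ + 2 * ‖a (k + 1 + 1) - a (k + 1)‖ ≤ ‖h₀‖ := by
        rcases Nat.eq_zero_or_pos k with hk0 | hkpos
        · subst hk0
          rw [ha1, dist_self]
          have e1 : ‖a 1 - a 0‖ = ‖h₀‖ := by rw [ha1s]
          have := halve
          rw [e1] at this
          rw [ha1] at this
          linarith
        · have h1 := hdistk (Nat.pos_iff_ne_zero.mp hkpos)
          have h2 := dist_triangle (a (k + 1)) (a k) a₁
          have h3 : dist (a (k + 1)) (a k) = ‖a (k + 1) - a k‖ := dist_eq_norm _ _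
          linarith
      exact ⟨memk1, v, hv, kant1, geom1, fun _ => dist1⟩
  -- final assembly
  have hforall : ∀ k : ℕ, a k ∈ closedBall a₁ ‖h₀‖ ∧
      ∃ Ak : E ≃L[ℝ] E, (Ak : E →L[ℝ] E) = DF (a k) ∧
        a (k + 1) = a k - Ak.symm (F (a k)) := by
    intro k
    obtain ⟨hmem, u, hu, -, -, -⟩ := key k
    refine ⟨hmem, ContinuousLinearEquiv.ofUnit u, ?_, ?_⟩
    · ext z
      rw [← hu]
      rfl
    · rw [hstep k, ← hu, Ring.inverse_unit]
      rfl
  have hcauchy : CauchySeq a := by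
    apply cauchySeq_of_le_geometric (1/2 : ℝ) ‖h₀‖ (by norm_num)
    intro n
    obtain ⟨-, u, -, -, hgeo, -⟩ := key n
    rw [dist_eq_norm, norm_sub_rev]
    calc ‖a (n + 1) - a n‖ ≤ ‖h₀‖ / 2 ^ n := hgeo
      _ = ‖h₀‖ * (1 / 2) ^ n := by rw [div_pow, one_pow]; ring
  obtain ⟨x, hx⟩ := cauchySeq_tendsto_of_complete hcauchy
  have xmem : x ∈ closedBall a₁ ‖h₀‖ :=
    IsClosed.mem_of_tendsto Metric.isClosed_closedBall hx (Filter.Eventually.of_forall fun k => (key k).1)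
  have hxU : x ∈ U := hball xmem
  have hFx : Tendsto (fun k => F (a k)) atTop (nhds (F x)) :=
    ((hdiff x hxU).continuousAt.tendsto).comp hx
  have hKnn : (0:ℝ) ≤ ‖DF a₁‖ + M * ‖h₀‖ :=
    add_nonneg (norm_nonneg _) (mul_nonneg hM (norm_nonneg _))
  have hbound : ∀ k : ℕ, ‖F (a k)‖ ≤ (‖DF a₁‖ + M * ‖h₀‖) * (‖h₀‖ / 2 ^ k) := by
    intro k
    obtain ⟨hmem, u, hu, -, hgeo, -⟩ := key k
    have h1 : Ring.inverse (DF (a k)) = (↑u⁻¹ : E →L[ℝ] E) := by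
      rw [← hu, Ring.inverse_unit]
    have h2 : a (k + 1) - a k = -((↑u⁻¹ : E →L[ℝ] E) (F (a k))) := by
      rw [hstep k, h1]; abel
    have h3 : F (a k) = -(DF (a k) (a (k + 1) - a k)) := by
      rw [h2, map_neg, ← hu, ← ContinuousLinearMap.mul_apply, u.mul_inv,
        ContinuousLinearMap.one_apply, neg_neg]
    have h4 : ‖DF (a k)‖ ≤ ‖DF a₁‖ + M * ‖h₀‖ := by
      have e1 : ‖DF (a k) - DF a₁‖ ≤ M * ‖a k - a₁‖ :=
        hlip _ hmem _ (mem_closedBall_self (norm_nonneg _))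
      have e2 : ‖a k - a₁‖ ≤ ‖h₀‖ := by
        rw [← dist_eq_norm]; exact mem_closedBall.mp hmem
      have e3 : M * ‖a k - a₁‖ ≤ M * ‖h₀‖ := mul_le_mul_of_nonneg_left e2 hM
      have e4 : ‖DF (a k)‖ ≤ ‖DF a₁‖ + ‖DF (a k) - DF a₁‖ := by
        have : DF (a k) = DF a₁ + (DF (a k) - DF a₁) := by abel
        calc ‖DF (a k)‖ = ‖DF a₁ + (DF (a k) - DF a₁)‖ := by rw [← this]
          _ ≤ ‖DF a₁‖ + ‖DF (a k) - DF a₁‖ := norm_add_le _ _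
      linarith
    have h5 : (0:ℝ) ≤ ‖h₀‖ / 2 ^ k := by positivity
    calc ‖F (a k)‖ = ‖DF (a k) (a (k + 1) - a k)‖ := by rw [h3, norm_neg]
      _ ≤ ‖DF (a k)‖ * ‖a (k + 1) - a k‖ := ContinuousLinearMap.le_opNorm _ _
      _ ≤ (‖DF a₁‖ + M * ‖h₀‖) * (‖h₀‖ / 2 ^ k) :=
          mul_le_mul h4 hgeo (norm_nonneg _) hKnn
  have hF0' : Tendsto (fun k => F (a k)) atTop (nhds 0) := by
    apply squeeze_zero_norm hbound
    have hgt : Tendsto (fun k : ℕ => ((‖DF a₁‖ + M * ‖h₀‖) * ‖h₀‖) * (1/2:ℝ) ^ k)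
        atTop (nhds 0) := by
      simpa using (tendsto_pow_atTop_nhds_zero_of_lt_one (by norm_num : (0:ℝ) ≤ 1/2)
        (by norm_num : (1/2:ℝ) < 1)).const_mul ((‖DF a₁‖ + M * ‖h₀‖) * ‖h₀‖)
    convert hgt using 2 with k
    rw [div_pow, one_pow]
    ring
  have hFxz : F x = 0 := tendsto_nhds_unique hFx hF0'
  exact ⟨a, ha0, hforall, x, xmem, hFxz, hx⟩


/-- **Kantorovich's Theorem (Newton's method convergence part).**
Under the Kantorovich hypotheses, the Newton iteration starting at `a₀` is well defined:
there is a sequence `a : ℕ → ℝⁿ` with `a 0 = a₀` such that for every `k`, `a k` lies in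
the closed ball `B̄`, the derivative `DF (a k)` is invertible, and
`a (k+1) = a k - (DF (a k))⁻¹ (F (a k))`; moreover this sequence converges to a point
`x ∈ B̄` with `F x = 0`. -/
theorem kantorovich_newton_converges
    (n : ℕ) (hn : 1 ≤ n)
    (F : EuclideanSpace ℝ (Fin n) → EuclideanSpace ℝ (Fin n))
    (DF : EuclideanSpace ℝ (Fin n) →
      (EuclideanSpace ℝ (Fin n) →L[ℝ] EuclideanSpace ℝ (Fin n)))
    (a₀ : EuclideanSpace ℝ (Fin n)) (U : Set (EuclideanSpace ℝ (Fin n)))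
    (hU : IsOpen U) (ha₀U : a₀ ∈ U)
    (hdiff : ∀ x ∈ U, HasFDerivAt F (DF x) x)
    (A : EuclideanSpace ℝ (Fin n) ≃L[ℝ] EuclideanSpace ℝ (Fin n))
    (hA : (A : EuclideanSpace ℝ (Fin n) →L[ℝ] EuclideanSpace ℝ (Fin n)) = DF a₀)
    (h₀ a₁ : EuclideanSpace ℝ (Fin n))
    (hh₀ : h₀ = -(A.symm (F a₀)))
    (ha₁ : a₁ = a₀ + h₀)
    (M : ℝ)
    (hball : Metric.closedBall a₁ ‖h₀‖ ⊆ U)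
    (hlip : ∀ u₁ ∈ Metric.closedBall a₁ ‖h₀‖, ∀ u₂ ∈ Metric.closedBall a₁ ‖h₀‖,
      ‖DF u₁ - DF u₂‖ ≤ M * ‖u₁ - u₂‖)
    (hkant : ‖F a₀‖ *
      ‖(A.symm : EuclideanSpace ℝ (Fin n) →L[ℝ] EuclideanSpace ℝ (Fin n))‖ ^ 2 * M
        ≤ 1 / 2) :
    ∃ a : ℕ → EuclideanSpace ℝ (Fin n),
      a 0 = a₀ ∧
      (∀ k : ℕ, a k ∈ Metric.closedBall a₁ ‖h₀‖ ∧
        ∃ Ak : EuclideanSpace ℝ (Fin n) ≃L[ℝ] EuclideanSpace ℝ (Fin n),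
          (Ak : EuclideanSpace ℝ (Fin n) →L[ℝ] EuclideanSpace ℝ (Fin n)) = DF (a k) ∧
          a (k + 1) = a k - Ak.symm (F (a k))) ∧
      ∃ x ∈ Metric.closedBall a₁ ‖h₀‖,
        F x = 0 ∧ Filter.Tendsto a Filter.atTop (nhds x) := by
  exact kantorovich_aux F DF a₀ U hU ha₀U hdiff A hA h₀ a₁ hh₀ ha₁ M hball hlip hkant
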